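/- Let G be a locally compact, Hausdorff, second-countable ample étale groupoid. Then the relation ∼_G on C_c(G⁰, ℤ)⁺, defined by f ∼_G g iff there exist finitely many compact open bisections E₁, …, Eₙ ⊆ G with f = Σᵢ 1_{s(Eᵢ)} and g = Σᵢ 1_{r(Eᵢ)}, is an equivalence relation. -/

import Mathlib

open Set

/-- A (locally compact, Hausdorff, second-countable) étale groupoid structure on a
topological space `G`.  Multiplication is formalized as a total function whose groupoid
axioms are only imposed on composable pairs (those `(α, β)` with `s α = r β`). -/
structure EtaleGroupoid (G : Type*) [TopologicalSpace G] where
  unitSpace : Set G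
  r : G → G
  s : G → G
  mul : G → G → G
  inv : G → G
  r_mem : ∀ α, r α ∈ unitSpace
  s_mem : ∀ α, s α ∈ unitSpace
  r_unit : ∀ u ∈ unitSpace, r u = u
  s_unit : ∀ u ∈ unitSpace, s u = u
  r_mul : ∀ α β, s α = r β → r (mul α β) = r α
  s_mul : ∀ α β, s α = r β → s (mul α β) = s β
  mul_assoc' : ∀ α β γ, s α = r β → s β = r γ → mul (mul α β) γ = mul α (mul β γ)
  unit_mul : ∀ α, mul (r α) α = α
  mul_unit : ∀ α, mul α (s α) = α
  r_inv : ∀ α, r (inv α) = s α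
  s_inv : ∀ α, s (inv α) = r α
  mul_inv : ∀ α, mul α (inv α) = r α
  inv_mul : ∀ α, mul (inv α) α = s α
  /-- multiplication is continuous on the set of composable pairs -/
  continuousOn_mul : ContinuousOn (fun p : G × G => mul p.1 p.2) {p : G × G | s p.1 = r p.2}
  continuous_inv : Continuous inv
  /-- étale: the range map is a local homeomorphism onto the unit space -/
  isLocalHomeomorph_r : IsLocalHomeomorph fun α => (⟨r α, r_mem α⟩ : unitSpace)
  /-- étale: the source map is a local homeomorphism onto the unit space -/
  isLocalHomeomorph_s : IsLocalHomeomorph fun α => (⟨s α, s_mem α⟩ : unitSpace)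

namespace EtaleGroupoid

variable {G : Type*} [TopologicalSpace G] (𝒢 : EtaleGroupoid G)

/-- A bisection: a set on which both `r` and `s` are injective. -/
def IsBisection (E : Set G) : Prop := Set.InjOn 𝒢.r E ∧ Set.InjOn 𝒢.s E

def IsOpenBisection (E : Set G) : Prop := IsOpen E ∧ 𝒢.IsBisection E

def IsCompactOpenBisection (E : Set G) : Prop := IsCompact E ∧ IsOpen E ∧ 𝒢.IsBisection E

/-- `U` is an open subset of the unit space `G⁰` (in the subspace topology). -/
def IsUnitOpen (U : Set G) : Prop :=
  U ⊆ 𝒢.unitSpace ∧ ∃ V : Set G, IsOpen V ∧ U = V ∩ 𝒢.unitSpace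

/-- `U_E = r(EU) = {r α : α ∈ E, s α ∈ U}`. -/
def ranOn (E U : Set G) : Set G := 𝒢.r '' {α ∈ E | 𝒢.s α ∈ U}

/-- `G` is minimal if every orbit `r(Gu)` is dense in the unit space. -/
def Minimal : Prop :=
  ∀ u ∈ 𝒢.unitSpace, 𝒢.unitSpace ⊆ closure (𝒢.r '' {α | 𝒢.s α = u})

/-- `G` is ample if its topology has a basis of compact open bisections. -/
def Ample : Prop := ∀ (α : G) (V : Set G), IsOpen V → α ∈ V →
  ∃ E : Set G, 𝒢.IsCompactOpenBisection E ∧ α ∈ E ∧ E ⊆ V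

end EtaleGroupoid
namespace EtaleGroupoid

variable {G : Type*} [TopologicalSpace G] (𝒢 : EtaleGroupoid G)

/-- `C_c(G⁰, ℤ)⁺`: compactly supported functions that are continuous on the unit space,
vanish off the unit space, and take nonnegative values. -/
def CcPos : AddSubmonoid (G → ℤ) where
  carrier := {f | ContinuousOn f 𝒢.unitSpace ∧ (∀ x ∉ 𝒢.unitSpace, f x = 0) ∧
    HasCompactSupport f ∧ ∀ x, 0 ≤ f x}
  zero_mem' := ⟨continuousOn_const, fun _ _ => rfl, HasCompactSupport.zero, fun _ => le_refl 0⟩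
  add_mem' := fun hf hg =>
    ⟨hf.1.add hg.1, fun x hx => by simp [Pi.add_apply, hf.2.1 x hx, hg.2.1 x hx],
      hf.2.2.1.add hg.2.2.1, fun x => add_nonneg (hf.2.2.2 x) (hg.2.2.2 x)⟩

/-- The indicator function `1_{s(E)}`. -/
noncomputable def srcInd (E : Set G) : G → ℤ := Set.indicator (𝒢.s '' E) 1

/-- The indicator function `1_{r(E)}`. -/
noncomputable def ranInd (E : Set G) : G → ℤ := Set.indicator (𝒢.r '' E) 1

/-- The relation `f ∼_G g`: there are finitely many compact open bisections `E₁, …, Eₙ`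
with `f = Σᵢ 1_{s(Eᵢ)}` and `g = Σᵢ 1_{r(Eᵢ)}`. -/
def TypeRel (f g : G → ℤ) : Prop :=
  ∃ L : List (Set G), (∀ E ∈ L, 𝒢.IsCompactOpenBisection E) ∧
    f = (L.map 𝒢.srcInd).sum ∧ g = (L.map 𝒢.ranInd).sum

theorem typeRel_add {f₁ g₁ f₂ g₂ : G → ℤ} (h₁ : 𝒢.TypeRel f₁ g₁) (h₂ : 𝒢.TypeRel f₂ g₂) :
    𝒢.TypeRel (f₁ + f₂) (g₁ + g₂) := by
  obtain ⟨L, hL, hf, hg⟩ := h₁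
  obtain ⟨M, hM, hf', hg'⟩ := h₂
  refine ⟨L ++ M, ?_, ?_, ?_⟩
  · intro E hE
    rcases List.mem_append.mp hE with h | h
    exacts [hL E h, hM E h]
  · simp [hf, hf', List.sum_append]
  · simp [hg, hg', List.sum_append]

end EtaleGroupoid

namespace EtaleGroupoid

variable {G : Type*} [TopologicalSpace G] (𝒢 : EtaleGroupoid G)

theorem continuous_r' : Continuous 𝒢.r :=
  continuous_subtype_val.comp 𝒢.isLocalHomeomorph_r.continuous

theorem continuous_s' : Continuous 𝒢.s :=
  continuous_subtype_val.comp 𝒢.isLocalHomeomorph_s.continuous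

theorem isOpen_unitSpace : IsOpen 𝒢.unitSpace := by
  rw [isOpen_iff_mem_nhds]
  intro u hu
  obtain ⟨e, hue, he⟩ := 𝒢.isLocalHomeomorph_s u
  have hinj : Set.InjOn 𝒢.s e.source := by
    intro a ha b hb hab
    refine e.injOn ha hb ?_
    rw [← he]
    exact Subtype.ext hab
  refine mem_nhds_iff.mpr ⟨e.source ∩ 𝒢.s ⁻¹' e.source, ?_, ?_, ?_⟩
  · rintro α ⟨h1, h2⟩
    have hs : 𝒢.s (𝒢.s α) = 𝒢.s α := 𝒢.s_unit _ (𝒢.s_mem α)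
    have : α = 𝒢.s α := (hinj h1 h2 hs.symm)
    rw [this]; exact 𝒢.s_mem α
  · exact e.open_source.inter (𝒢.continuous_s'.isOpen_preimage _ e.open_source)
  · refine ⟨hue, ?_⟩
    show 𝒢.s u ∈ e.source
    rw [𝒢.s_unit u hu]; exact hue
theorem isClosed_unitSpace [T2Space G] : IsClosed 𝒢.unitSpace := by
  have h : 𝒢.unitSpace = {α | 𝒢.r α = α} := by
    ext α
    exact ⟨fun h => 𝒢.r_unit α h, fun h => h ▸ 𝒢.r_mem α⟩
  rw [h]
  exact isClosed_eq 𝒢.continuous_r' continuous_id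

theorem isOpen_image_s {E : Set G} (hE : IsOpen E) : IsOpen (𝒢.s '' E) := by
  have h1 : 𝒢.s '' E = Subtype.val '' ((fun α => (⟨𝒢.s α, 𝒢.s_mem α⟩ : 𝒢.unitSpace)) '' E) := by
    rw [Set.image_image]
  rw [h1]
  exact 𝒢.isOpen_unitSpace.isOpenMap_subtype_val _ (𝒢.isLocalHomeomorph_s.isOpenMap E hE)

theorem isOpen_image_r {E : Set G} (hE : IsOpen E) : IsOpen (𝒢.r '' E) := by
  have h1 : 𝒢.r '' E = Subtype.val '' ((fun α => (⟨𝒢.r α, 𝒢.r_mem α⟩ : 𝒢.unitSpace)) '' E) := by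
    rw [Set.image_image]
  rw [h1]
  exact 𝒢.isOpen_unitSpace.isOpenMap_subtype_val _ (𝒢.isLocalHomeomorph_r.isOpenMap E hE)

theorem image_s_of_subset_unit {S : Set G} (hS : S ⊆ 𝒢.unitSpace) : 𝒢.s '' S = S := by
  ext x
  constructor
  · rintro ⟨a, ha, rfl⟩
    rw [𝒢.s_unit a (hS ha)]; exact ha
  · intro hx
    exact ⟨x, hx, 𝒢.s_unit x (hS hx)⟩

theorem image_r_of_subset_unit {S : Set G} (hS : S ⊆ 𝒢.unitSpace) : 𝒢.r '' S = S := by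
  ext x
  constructor
  · rintro ⟨a, ha, rfl⟩
    rw [𝒢.r_unit a (hS ha)]; exact ha
  · intro hx
    exact ⟨x, hx, 𝒢.r_unit x (hS hx)⟩

theorem inv_inv' (α : G) : 𝒢.inv (𝒢.inv α) = α := by
  have h1 : 𝒢.s α = 𝒢.r (𝒢.inv α) := (𝒢.r_inv α).symm
  have h2 : 𝒢.s (𝒢.inv α) = 𝒢.r (𝒢.inv (𝒢.inv α)) := (𝒢.r_inv _).symm
  have h3 : 𝒢.r (𝒢.inv (𝒢.inv α)) = 𝒢.r α := by rw [𝒢.r_inv, 𝒢.s_inv]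
  symm
  calc α = 𝒢.mul α (𝒢.s α) := (𝒢.mul_unit α).symm
  _ = 𝒢.mul α (𝒢.mul (𝒢.inv α) (𝒢.inv (𝒢.inv α))) := by
      rw [𝒢.mul_inv (𝒢.inv α), 𝒢.r_inv]
  _ = 𝒢.mul (𝒢.mul α (𝒢.inv α)) (𝒢.inv (𝒢.inv α)) := (𝒢.mul_assoc' _ _ _ h1 h2).symm
  _ = 𝒢.mul (𝒢.r α) (𝒢.inv (𝒢.inv α)) := by rw [𝒢.mul_inv]
  _ = 𝒢.inv (𝒢.inv α) := by rw [← h3]; exact 𝒢.unit_mul _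

end EtaleGroupoid


namespace EtaleGroupoid

variable {G : Type*} [TopologicalSpace G] {𝒢 : EtaleGroupoid G}

theorem icob_subset {E X : Set G} (hE : 𝒢.IsCompactOpenBisection E) (hX : X ⊆ E)
    (hXc : IsCompact X) (hXo : IsOpen X) : 𝒢.IsCompactOpenBisection X :=
  ⟨hXc, hXo, hE.2.2.1.mono hX, hE.2.2.2.mono hX⟩

theorem icob_inter_clopen {E V : Set G} (hE : 𝒢.IsCompactOpenBisection E)
    (h1 : IsOpen V) (h2 : IsClosed V) :
    𝒢.IsCompactOpenBisection (E ∩ V) ∧ 𝒢.IsCompactOpenBisection (E \ V) :=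
  ⟨icob_subset hE inter_subset_left (hE.1.inter_right h2) (hE.2.1.inter h1),
   icob_subset hE diff_subset (hE.1.diff h1) (hE.2.1.sdiff h2)⟩

theorem image_r_inter_preimage (E V : Set G) :
    𝒢.r '' (E ∩ 𝒢.r ⁻¹' V) = 𝒢.r '' E ∩ V := by
  ext x
  constructor
  · rintro ⟨α, ⟨hα, hv⟩, rfl⟩; exact ⟨⟨α, hα, rfl⟩, hv⟩
  · rintro ⟨⟨α, hα, rfl⟩, hv⟩; exact ⟨α, ⟨hα, hv⟩, rfl⟩

theorem image_s_inter_preimage (E V : Set G) :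
    𝒢.s '' (E ∩ 𝒢.s ⁻¹' V) = 𝒢.s '' E ∩ V := by
  ext x
  constructor
  · rintro ⟨α, ⟨hα, hv⟩, rfl⟩; exact ⟨⟨α, hα, rfl⟩, hv⟩
  · rintro ⟨⟨α, hα, rfl⟩, hv⟩; exact ⟨α, ⟨hα, hv⟩, rfl⟩

theorem srcInd_split (𝒢 : EtaleGroupoid G) {E : Set G} (V : Set G) (hinj : Set.InjOn 𝒢.s E) :
    𝒢.srcInd E = 𝒢.srcInd (E ∩ V) + 𝒢.srcInd (E \ V) := by
  have hd : Disjoint (𝒢.s '' (E ∩ V)) (𝒢.s '' (E \ V)) := by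
    rw [Set.disjoint_iff_inter_eq_empty, ← hinj.image_inter inter_subset_left diff_subset]
    have : (E ∩ V) ∩ (E \ V) = ∅ := by
      ext x; simp only [mem_inter_iff, mem_diff, mem_empty_iff_false, iff_false]; tauto
    rw [this, image_empty]
  have hU : 𝒢.s '' E = 𝒢.s '' (E ∩ V) ∪ 𝒢.s '' (E \ V) := by
    rw [← image_union, inter_union_diff]
  unfold srcInd
  rw [hU, indicator_union_of_disjoint hd]
  rfl

theorem ranInd_split (𝒢 : EtaleGroupoid G) {E : Set G} (V : Set G) (hinj : Set.InjOn 𝒢.r E) :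
    𝒢.ranInd E = 𝒢.ranInd (E ∩ V) + 𝒢.ranInd (E \ V) := by
  have hd : Disjoint (𝒢.r '' (E ∩ V)) (𝒢.r '' (E \ V)) := by
    rw [Set.disjoint_iff_inter_eq_empty, ← hinj.image_inter inter_subset_left diff_subset]
    have : (E ∩ V) ∩ (E \ V) = ∅ := by
      ext x; simp only [mem_inter_iff, mem_diff, mem_empty_iff_false, iff_false]; tauto
    rw [this, image_empty]
  have hU : 𝒢.r '' E = 𝒢.r '' (E ∩ V) ∪ 𝒢.r '' (E \ V) := by
    rw [← image_union, inter_union_diff]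
  unfold ranInd
  rw [hU, indicator_union_of_disjoint hd]
  rfl

theorem srcInd_congr (𝒢 : EtaleGroupoid G) {E K : Set G} (h : 𝒢.s '' E = 𝒢.s '' K) :
    𝒢.srcInd E = 𝒢.srcInd K := by unfold srcInd; rw [h]

theorem ranInd_congr (𝒢 : EtaleGroupoid G) {E K : Set G} (h : 𝒢.r '' E = 𝒢.r '' K) :
    𝒢.ranInd E = 𝒢.ranInd K := by unfold ranInd; rw [h]

theorem srcInd_empty (𝒢 : EtaleGroupoid G) : 𝒢.srcInd (∅ : Set G) = 0 := by
  unfold srcInd; rw [image_empty, indicator_empty]; rfl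

theorem ranInd_empty (𝒢 : EtaleGroupoid G) : 𝒢.ranInd (∅ : Set G) = 0 := by
  unfold ranInd; rw [image_empty, indicator_empty]; rfl

theorem srcInd_nonneg (𝒢 : EtaleGroupoid G) (E : Set G) (x : G) : 0 ≤ 𝒢.srcInd E x :=
  Set.indicator_nonneg (fun _ _ => zero_le_one) x

/-- continuity of the inverse of an injective open map on the image -/
theorem section_continuousOn {F : Set G} {p h : G → G}
    (himg : ∀ U : Set G, IsOpen U → IsOpen (p '' U)) (hFo : IsOpen F)
    (hinj : Set.InjOn p F) (hh : ∀ v ∈ p '' F, h v ∈ F ∧ p (h v) = v) :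
    ContinuousOn h (p '' F) := by
  rw [continuousOn_iff']
  intro t ht
  refine ⟨p '' (F ∩ t), himg _ (hFo.inter ht), ?_⟩
  ext x
  constructor
  · rintro ⟨hxt, hxF⟩
    exact ⟨⟨h x, ⟨(hh x hxF).1, hxt⟩, (hh x hxF).2⟩, hxF⟩
  · rintro ⟨⟨β, ⟨hβF, hβt⟩, rfl⟩, hxF⟩
    have h1 := hh _ hxF
    have heq : h (p β) = β := hinj h1.1 hβF h1.2
    exact ⟨show h (p β) ∈ t by rw [heq]; exact hβt, hxF⟩

/-- The key composition lemma: given compact open bisections `E`, `F` with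
`r(E) = s(F)`, the product set `F · E` is a compact open bisection with source
`s(E)` and range `r(F)`. -/
theorem compose_icob [T2Space G] {E F : Set G} (hE : 𝒢.IsCompactOpenBisection E)
    (hF : 𝒢.IsCompactOpenBisection F) (hEF : 𝒢.r '' E = 𝒢.s '' F) :
    ∃ K : Set G, 𝒢.IsCompactOpenBisection K ∧ 𝒢.s '' K = 𝒢.s '' E ∧ 𝒢.r '' K = 𝒢.r '' F := by
  classical
  -- the section `h` of `s` over `F`
  have hexh : ∀ v : G, ∃ β, v ∈ 𝒢.s '' F → β ∈ F ∧ 𝒢.s β = v := by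
    intro v
    by_cases hv : v ∈ 𝒢.s '' F
    · obtain ⟨β, hβ, hsβ⟩ := hv; exact ⟨β, fun _ => ⟨hβ, hsβ⟩⟩
    · exact ⟨v, fun h => absurd h hv⟩
  choose h hh using hexh
  -- the section `g` of `r` over `F`
  have hexg : ∀ v : G, ∃ β, v ∈ 𝒢.r '' F → β ∈ F ∧ 𝒢.r β = v := by
    intro v
    by_cases hv : v ∈ 𝒢.r '' F
    · obtain ⟨β, hβ, hrβ⟩ := hv; exact ⟨β, fun _ => ⟨hβ, hrβ⟩⟩
    · exact ⟨v, fun h => absurd h hv⟩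
  choose g hg using hexg
  have hcont : ContinuousOn h (𝒢.s '' F) :=
    section_continuousOn (fun U hU => 𝒢.isOpen_image_s hU) hF.2.1 hF.2.2.2 hh
  have gcont : ContinuousOn g (𝒢.r '' F) :=
    section_continuousOn (fun U hU => 𝒢.isOpen_image_r hU) hF.2.1 hF.2.2.1 hg
  set φ : G → G := fun α => 𝒢.mul (h (𝒢.r α)) α with hφ
  -- basic facts for `α ∈ E`
  have hmem : ∀ α ∈ E, 𝒢.r α ∈ 𝒢.s '' F := by
    intro α hα; rw [← hEF]; exact ⟨α, hα, rfl⟩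
  have hhF : ∀ α ∈ E, h (𝒢.r α) ∈ F := fun α hα => (hh _ (hmem α hα)).1
  have hcomp : ∀ α ∈ E, 𝒢.s (h (𝒢.r α)) = 𝒢.r α := fun α hα => (hh _ (hmem α hα)).2
  have hsφ : ∀ α ∈ E, 𝒢.s (φ α) = 𝒢.s α := fun α hα => 𝒢.s_mul _ _ (hcomp α hα)
  have hrφ : ∀ α ∈ E, 𝒢.r (φ α) = 𝒢.r (h (𝒢.r α)) := fun α hα => 𝒢.r_mul _ _ (hcomp α hα)
  refine ⟨φ '' E, ⟨?_, ?_, ?_, ?_⟩, ?_, ?_⟩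
  · -- compact
    refine IsCompact.image_of_continuousOn hE.1 ?_
    have hinner : ContinuousOn (fun α => ((h (𝒢.r α), α) : G × G)) E := by
      refine ContinuousOn.prodMk ?_ continuousOn_id
      exact hcont.comp 𝒢.continuous_r'.continuousOn (fun α hα => hmem α hα)
    exact 𝒢.continuousOn_mul.comp hinner (fun α hα => hcomp α hα)
  · -- open
    set U₀ : Set G := 𝒢.r ⁻¹' (𝒢.r '' F) with hU₀
    set ψ : G → G := fun γ => 𝒢.mul (𝒢.inv (g (𝒢.r γ))) γ with hψ
    have hU₀o : IsOpen U₀ := (𝒢.isOpen_image_r hF.2.1).preimage 𝒢.continuous_r'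
    have hψc : ContinuousOn ψ U₀ := by
      have hinner : ContinuousOn (fun γ => ((𝒢.inv (g (𝒢.r γ)), γ) : G × G)) U₀ := by
        refine ContinuousOn.prodMk ?_ continuousOn_id
        exact (𝒢.continuous_inv.comp_continuousOn
          (gcont.comp 𝒢.continuous_r'.continuousOn (fun γ hγ => hγ)))
      refine 𝒢.continuousOn_mul.comp hinner ?_
      intro γ hγ
      show 𝒢.s (𝒢.inv (g (𝒢.r γ))) = 𝒢.r γ
      rw [𝒢.s_inv]
      exact (hg _ hγ).2
    have hKeq : φ '' E = U₀ ∩ ψ ⁻¹' E := by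
      ext γ
      constructor
      · rintro ⟨α, hα, rfl⟩
        have hβF := hhF α hα
        have hβs := hcomp α hα
        have hrγ : 𝒢.r (φ α) = 𝒢.r (h (𝒢.r α)) := hrφ α hα
        have hγU : φ α ∈ U₀ := by
          show 𝒢.r (φ α) ∈ 𝒢.r '' F
          rw [hrγ]; exact ⟨_, hβF, rfl⟩
        refine ⟨hγU, ?_⟩
        show ψ (φ α) ∈ E
        have hgφ : g (𝒢.r (φ α)) = h (𝒢.r α) := by
          refine hF.2.2.1 (hg _ hγU).1 hβF ?_
          rw [(hg _ hγU).2, hrγ]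
        show 𝒢.mul (𝒢.inv (g (𝒢.r (φ α)))) (φ α) ∈ E
        rw [hgφ]
        have hassoc : 𝒢.mul (𝒢.inv (h (𝒢.r α))) (𝒢.mul (h (𝒢.r α)) α)
            = 𝒢.mul (𝒢.mul (𝒢.inv (h (𝒢.r α))) (h (𝒢.r α))) α := by
          refine (𝒢.mul_assoc' _ _ _ ?_ ?_).symm
          · rw [𝒢.s_inv]
          · exact hβs
        show 𝒢.mul (𝒢.inv (h (𝒢.r α))) (𝒢.mul (h (𝒢.r α)) α) ∈ E
        rw [hassoc, 𝒢.inv_mul, hβs, 𝒢.unit_mul]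
        exact hα
      · rintro ⟨hγU, hψE⟩
        set β := g (𝒢.r γ) with hβ
        have hβF : β ∈ F := (hg _ hγU).1
        have hrβ : 𝒢.r β = 𝒢.r γ := (hg _ hγU).2
        set α := ψ γ with hα
        have hαE : α ∈ E := hψE
        have hrα : 𝒢.r α = 𝒢.s β := by
          show 𝒢.r (𝒢.mul (𝒢.inv β) γ) = 𝒢.s β
          rw [𝒢.r_mul _ _ (by rw [𝒢.s_inv]; exact hrβ), 𝒢.r_inv]
        have hhα : h (𝒢.r α) = β := by
          refine hF.2.2.2 (hh _ (hmem α hαE)).1 hβF ?_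
          rw [(hh _ (hmem α hαE)).2, hrα]
        refine ⟨α, hαE, ?_⟩
        show 𝒢.mul (h (𝒢.r α)) α = γ
        rw [hhα]
        show 𝒢.mul β (𝒢.mul (𝒢.inv β) γ) = γ
        rw [← 𝒢.mul_assoc' _ _ _ (by rw [𝒢.r_inv]) (by rw [𝒢.s_inv]; exact hrβ),
          𝒢.mul_inv, hrβ, 𝒢.unit_mul]
    rw [hKeq]
    exact hψc.isOpen_inter_preimage hU₀o hE.2.1
  · -- InjOn r
    rintro _ ⟨a, ha, rfl⟩ _ ⟨b, hb, rfl⟩ hr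
    rw [hrφ a ha, hrφ b hb] at hr
    have h1 : h (𝒢.r a) = h (𝒢.r b) := hF.2.2.1 (hhF a ha) (hhF b hb) hr
    have h2 : 𝒢.r a = 𝒢.r b := by
      rw [← hcomp a ha, ← hcomp b hb, h1]
    rw [hE.2.2.1 ha hb h2]
  · -- InjOn s
    rintro _ ⟨a, ha, rfl⟩ _ ⟨b, hb, rfl⟩ hs
    rw [hsφ a ha, hsφ b hb] at hs
    rw [hE.2.2.2 ha hb hs]
  · -- s image
    rw [Set.image_image]
    exact Set.image_congr hsφ
  · -- r image
    rw [Set.image_image]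
    ext x
    constructor
    · rintro ⟨α, hα, rfl⟩
      show 𝒢.r (φ α) ∈ 𝒢.r '' F
      rw [hrφ α hα]
      exact ⟨_, hhF α hα, rfl⟩
    · rintro ⟨β, hβ, rfl⟩
      have hsβ : 𝒢.s β ∈ 𝒢.r '' E := by rw [hEF]; exact ⟨β, hβ, rfl⟩
      obtain ⟨α, hα, hrα⟩ := hsβ
      have hhβ : h (𝒢.r α) = β := by
        refine hF.2.2.2 (hh _ (hmem α hα)).1 hβ ?_
        rw [(hh _ (hmem α hα)).2, hrα]
      exact ⟨α, hα, show 𝒢.r (φ α) = 𝒢.r β by rw [hrφ α hα, hhβ]⟩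

end EtaleGroupoid


namespace EtaleGroupoid

variable {G : Type*} [TopologicalSpace G] {𝒢 : EtaleGroupoid G}

theorem ranInd_nonneg (𝒢 : EtaleGroupoid G) (E : Set G) (x : G) : 0 ≤ 𝒢.ranInd E x :=
  Set.indicator_nonneg (fun _ _ => zero_le_one) x

theorem list_sum_apply' (h : Set G → (G → ℤ)) (L : List (Set G)) (x : G) :
    (L.map h).sum x = (L.map fun E => h E x).sum := by
  induction L with
  | nil => rfl
  | cons E L ih => simp only [List.map_cons, List.sum_cons, Pi.add_apply, ih]

theorem image_r_diff_preimage (E V : Set G) :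
    𝒢.r '' (E \ 𝒢.r ⁻¹' V) = 𝒢.r '' E \ V := by
  ext x
  constructor
  · rintro ⟨α, ⟨hα, hv⟩, rfl⟩; exact ⟨⟨α, hα, rfl⟩, hv⟩
  · rintro ⟨⟨α, hα, rfl⟩, hv⟩; exact ⟨α, ⟨hα, hv⟩, rfl⟩

theorem consume [T2Space G] (M : List (Set G)) :
    ∀ E : Set G, 𝒢.IsCompactOpenBisection E →
    (∀ F ∈ M, 𝒢.IsCompactOpenBisection F) →
    𝒢.r '' E ⊆ (⋃ F ∈ M, 𝒢.s '' F) →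
    ∃ K M' : List (Set G), (∀ X ∈ K, 𝒢.IsCompactOpenBisection X) ∧
      (∀ F ∈ M', 𝒢.IsCompactOpenBisection F) ∧
      (K.map 𝒢.srcInd).sum = 𝒢.srcInd E ∧
      (M.map 𝒢.ranInd).sum = (K.map 𝒢.ranInd).sum + (M'.map 𝒢.ranInd).sum ∧
      (M.map 𝒢.srcInd).sum = 𝒢.ranInd E + (M'.map 𝒢.srcInd).sum := by
  induction M with
  | nil =>
    intro E hE _ hsub
    have hEe : E = ∅ := by
      by_contra hne
      obtain ⟨α, hα⟩ := nonempty_iff_ne_empty.mpr hne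
      have := hsub ⟨α, hα, rfl⟩
      simp at this
    refine ⟨[], [], by simp, by simp, ?_, by simp, ?_⟩
    · rw [hEe, 𝒢.srcInd_empty]; rfl
    · rw [hEe, 𝒢.ranInd_empty]; simp
  | cons F M₀ ih =>
    intro E hE hM hsub
    have hF : 𝒢.IsCompactOpenBisection F := hM F (by simp)
    have hM₀ : ∀ X ∈ M₀, 𝒢.IsCompactOpenBisection X := fun X hX => hM X (by simp [hX])
    set V : Set G := 𝒢.r '' E ∩ 𝒢.s '' F with hV
    have hVo : IsOpen V := (𝒢.isOpen_image_r hE.2.1).inter (𝒢.isOpen_image_s hF.2.1)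
    have hVcl : IsClosed V :=
      ((hE.1.image 𝒢.continuous_r').isClosed).inter ((hF.1.image 𝒢.continuous_s').isClosed)
    have hrpre_o : IsOpen (𝒢.r ⁻¹' V) := hVo.preimage 𝒢.continuous_r'
    have hrpre_c : IsClosed (𝒢.r ⁻¹' V) := hVcl.preimage 𝒢.continuous_r'
    have hspre_o : IsOpen (𝒢.s ⁻¹' V) := hVo.preimage 𝒢.continuous_s'
    have hspre_c : IsClosed (𝒢.s ⁻¹' V) := hVcl.preimage 𝒢.continuous_s'
    obtain ⟨hE₁, hE₂⟩ := icob_inter_clopen hE hrpre_o hrpre_c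
    obtain ⟨hF₁, hF₂⟩ := icob_inter_clopen hF hspre_o hspre_c
    have hrE₁ : 𝒢.r '' (E ∩ 𝒢.r ⁻¹' V) = V := by
      rw [image_r_inter_preimage]
      exact inter_eq_self_of_subset_right inter_subset_left
    have hsF₁ : 𝒢.s '' (F ∩ 𝒢.s ⁻¹' V) = V := by
      rw [image_s_inter_preimage]
      exact inter_eq_self_of_subset_right inter_subset_right
    obtain ⟨K₀, hK₀, hK₀s, hK₀r⟩ := compose_icob hE₁ hF₁ (hrE₁.trans hsF₁.symm)
    have hsub₂ : 𝒢.r '' (E \ 𝒢.r ⁻¹' V) ⊆ (⋃ X ∈ M₀, 𝒢.s '' X) := by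
      rw [image_r_diff_preimage]
      rintro x ⟨hxE, hxV⟩
      have := hsub hxE
      simp only [mem_iUnion, exists_prop] at this ⊢
      obtain ⟨X, hXM, hxX⟩ := this
      rcases List.mem_cons.mp hXM with h | h
      · exact absurd ⟨hxE, h ▸ hxX⟩ hxV
      · exact ⟨X, h, hxX⟩
    obtain ⟨K₁, M₁, hK₁, hM₁, hK₁s, hM₀r, hM₀s⟩ := ih _ hE₂ hM₀ hsub₂
    refine ⟨K₀ :: K₁, (F \ 𝒢.s ⁻¹' V) :: M₁, ?_, ?_, ?_, ?_, ?_⟩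
    · intro X hX
      rcases List.mem_cons.mp hX with h | h
      · exact h ▸ hK₀
      · exact hK₁ X h
    · intro X hX
      rcases List.mem_cons.mp hX with h | h
      · exact h ▸ hF₂
      · exact hM₁ X h
    · -- sources of K sum to srcInd E
      rw [List.map_cons, List.sum_cons, hK₁s, 𝒢.srcInd_congr hK₀s,
        ← 𝒢.srcInd_split (𝒢.r ⁻¹' V) hE.2.2.2]
    · -- ranges of M
      rw [List.map_cons, List.sum_cons, List.map_cons, List.sum_cons, List.map_cons,
        List.sum_cons, hM₀r, 𝒢.ranInd_split (𝒢.s ⁻¹' V) hF.2.2.1, 𝒢.ranInd_congr hK₀r]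
      abel
    · -- sources of M
      have hF₁E₁ : 𝒢.srcInd (F ∩ 𝒢.s ⁻¹' V) = 𝒢.ranInd (E ∩ 𝒢.r ⁻¹' V) := by
        unfold srcInd ranInd
        rw [hsF₁, hrE₁]
      rw [List.map_cons, List.sum_cons, List.map_cons, List.sum_cons, hM₀s,
        𝒢.srcInd_split (𝒢.s ⁻¹' V) hF.2.2.2, hF₁E₁,
        𝒢.ranInd_split (𝒢.r ⁻¹' V) hE.2.2.1]
      abel

theorem trans_key [T2Space G] (L : List (Set G)) :
    ∀ M : List (Set G), (∀ X ∈ L, 𝒢.IsCompactOpenBisection X) →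
    (∀ F ∈ M, 𝒢.IsCompactOpenBisection F) →
    (L.map 𝒢.ranInd).sum = (M.map 𝒢.srcInd).sum →
    ∃ K : List (Set G), (∀ X ∈ K, 𝒢.IsCompactOpenBisection X) ∧
      (K.map 𝒢.srcInd).sum = (L.map 𝒢.srcInd).sum ∧
      (K.map 𝒢.ranInd).sum = (M.map 𝒢.ranInd).sum := by
  induction L with
  | nil =>
    intro M _ hM heq
    refine ⟨[], by simp, by simp, ?_⟩
    symm
    apply List.sum_eq_zero
    intro y hy
    obtain ⟨F, hF, rfl⟩ := List.mem_map.mp hy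
    have hFe : F = ∅ := by
      by_contra hne
      obtain ⟨β, hβ⟩ := nonempty_iff_ne_empty.mpr hne
      have h0 : (M.map 𝒢.srcInd).sum (𝒢.s β) = 0 := by
        rw [← heq]; rfl
      rw [list_sum_apply'] at h0
      have h1 : 𝒢.srcInd F (𝒢.s β) ≤ (M.map fun X => 𝒢.srcInd X (𝒢.s β)).sum := by
        refine List.single_le_sum ?_ _ (List.mem_map.mpr ⟨F, hF, rfl⟩)
        intro z hz
        obtain ⟨X, _, rfl⟩ := List.mem_map.mp hz
        exact 𝒢.srcInd_nonneg X _
      have h2 : 𝒢.srcInd F (𝒢.s β) = 1 := by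
        have hm : 𝒢.s β ∈ 𝒢.s '' F := Set.mem_image_of_mem _ hβ
        unfold srcInd
        rw [Set.indicator_of_mem hm]
        rfl
      omega
    rw [hFe, 𝒢.ranInd_empty]
  | cons E L' ih =>
    intro M hL hM heq
    have hE : 𝒢.IsCompactOpenBisection E := hL E (by simp)
    have hL' : ∀ X ∈ L', 𝒢.IsCompactOpenBisection X := fun X hX => hL X (by simp [hX])
    have hsub : 𝒢.r '' E ⊆ (⋃ F ∈ M, 𝒢.s '' F) := by
      intro x hx
      by_contra hnot
      have hall : ∀ F ∈ M, x ∉ 𝒢.s '' F := by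
        intro F hF hxF
        exact hnot (mem_iUnion₂.mpr ⟨F, hF, hxF⟩)
      have h0 : (M.map 𝒢.srcInd).sum x = 0 := by
        rw [list_sum_apply']
        apply List.sum_eq_zero
        intro y hy
        obtain ⟨F, hF, rfl⟩ := List.mem_map.mp hy
        exact Set.indicator_of_notMem (hall F hF) 1
      have h1 : ((E :: L').map 𝒢.ranInd).sum x =
          𝒢.ranInd E x + (L'.map 𝒢.ranInd).sum x := by
        rw [List.map_cons, List.sum_cons]; rfl
      have h2 : 𝒢.ranInd E x = 1 := by
        unfold ranInd
        rw [Set.indicator_of_mem hx]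
        rfl
      have h3 : 0 ≤ (L'.map 𝒢.ranInd).sum x := by
        rw [list_sum_apply']
        apply List.sum_nonneg
        intro z hz
        obtain ⟨X, _, rfl⟩ := List.mem_map.mp hz
        exact 𝒢.ranInd_nonneg X x
      have h4 : ((E :: L').map 𝒢.ranInd).sum x = (M.map 𝒢.srcInd).sum x := by rw [heq]
      omega
    obtain ⟨K₀, M', hK₀, hM', hK₀s, hMr, hMs⟩ := consume M E hE hM hsub
    have heq' : (L'.map 𝒢.ranInd).sum = (M'.map 𝒢.srcInd).sum := by
      have h5 : 𝒢.ranInd E + (L'.map 𝒢.ranInd).sum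
          = 𝒢.ranInd E + (M'.map 𝒢.srcInd).sum := by
        rw [← hMs, ← heq, List.map_cons, List.sum_cons]
      exact add_left_cancel h5
    obtain ⟨K₁, hK₁, hK₁s, hK₁r⟩ := ih M' hL' hM' heq'
    refine ⟨K₀ ++ K₁, ?_, ?_, ?_⟩
    · intro X hX
      rcases List.mem_append.mp hX with h | h
      · exact hK₀ X h
      · exact hK₁ X h
    · rw [List.map_append, List.sum_append, hK₀s, hK₁s, List.map_cons, List.sum_cons]
    · rw [List.map_append, List.sum_append, hK₁r, hMr]

end EtaleGroupoid


namespace EtaleGroupoid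

variable {G : Type*} [TopologicalSpace G] {𝒢 : EtaleGroupoid G}

theorem icob_inv {E : Set G} (hE : 𝒢.IsCompactOpenBisection E) :
    𝒢.IsCompactOpenBisection (𝒢.inv '' E) := by
  have hpre : 𝒢.inv '' E = 𝒢.inv ⁻¹' E := by
    ext γ
    constructor
    · rintro ⟨a, ha, rfl⟩
      show 𝒢.inv (𝒢.inv a) ∈ E
      rw [𝒢.inv_inv']; exact ha
    · intro hγ; exact ⟨𝒢.inv γ, hγ, 𝒢.inv_inv' γ⟩
  refine ⟨hE.1.image 𝒢.continuous_inv, ?_, ?_, ?_⟩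
  · rw [hpre]; exact hE.2.1.preimage 𝒢.continuous_inv
  · rintro _ ⟨a, ha, rfl⟩ _ ⟨b, hb, rfl⟩ hr
    rw [𝒢.r_inv, 𝒢.r_inv] at hr
    rw [hE.2.2.2 ha hb hr]
  · rintro _ ⟨a, ha, rfl⟩ _ ⟨b, hb, rfl⟩ hs
    rw [𝒢.s_inv, 𝒢.s_inv] at hs
    rw [hE.2.2.1 ha hb hs]

theorem srcInd_inv (𝒢 : EtaleGroupoid G) (E : Set G) :
    𝒢.srcInd (𝒢.inv '' E) = 𝒢.ranInd E := by
  unfold srcInd ranInd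
  have h : (fun a => 𝒢.s (𝒢.inv a)) '' E = 𝒢.r '' E := Set.image_congr fun a _ => 𝒢.s_inv a
  rw [Set.image_image, h]

theorem ranInd_inv (𝒢 : EtaleGroupoid G) (E : Set G) :
    𝒢.ranInd (𝒢.inv '' E) = 𝒢.srcInd E := by
  unfold srcInd ranInd
  have h : (fun a => 𝒢.r (𝒢.inv a)) '' E = 𝒢.s '' E := Set.image_congr fun a _ => 𝒢.r_inv a
  rw [Set.image_image, h]

private theorem sum_range_indicator (N : ℕ) (m : ℤ) (h1 : 0 ≤ m) :
    ((List.range N).map fun (k : ℕ) => if (k : ℤ) + 1 ≤ m then (1 : ℤ) else 0).sum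
      = min m N := by
  induction N with
  | zero => simp; omega
  | succ n ihn =>
    rw [List.range_succ, List.map_append, List.sum_append]
    simp only [List.map_cons, List.map_nil, List.sum_cons, List.sum_nil, ihn]
    by_cases h : (n : ℤ) + 1 ≤ m
    · rw [if_pos h]; push_cast; omega
    · rw [if_neg h]; push_cast; omega

theorem typeRel_refl [T2Space G] {f : G → ℤ} (hm : f ∈ 𝒢.CcPos) : 𝒢.TypeRel f f := by
  classical
  obtain ⟨hc, hz, hcs, hpos⟩ := hm
  have hGo := 𝒢.isOpen_unitSpace
  have hGc := 𝒢.isClosed_unitSpace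
  have hcont : Continuous f := by
    rw [continuous_iff_continuousAt]
    intro x
    by_cases hx : x ∈ 𝒢.unitSpace
    · exact hc.continuousAt (hGo.mem_nhds hx)
    · have h0 : ContinuousOn f 𝒢.unitSpaceᶜ :=
        continuousOn_const.congr fun y hy => hz y hy
      exact h0.continuousAt (hGc.isOpen_compl.mem_nhds hx)
  have hfin : (f '' tsupport f).Finite := (hcs.image hcont).finite_of_discrete
  set N : ℕ := hfin.toFinset.sup (fun n => n.toNat) with hN
  have hbound : ∀ y, f y ≤ (N : ℤ) := by
    intro y
    by_cases hy : f y = 0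
    · rw [hy]; exact_mod_cast Int.ofNat_nonneg N
    · have hmem : f y ∈ f '' tsupport f := ⟨y, subset_tsupport _ hy, rfl⟩
      have hle : (f y).toNat ≤ N := Finset.le_sup (hfin.mem_toFinset.mpr hmem)
      omega
  set S : ℕ → Set G := fun k => {z | (k : ℤ) + 1 ≤ f z} with hS
  have hSsub : ∀ k, S k ⊆ 𝒢.unitSpace := by
    intro k z hzk
    by_contra hzU
    have := hz z hzU
    have h1 : (k : ℤ) + 1 ≤ f z := hzk
    omega
  have hSpre : ∀ k, S k = f ⁻¹' {m : ℤ | (k : ℤ) + 1 ≤ m} := fun k => rfl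
  have hSicob : ∀ k, 𝒢.IsCompactOpenBisection (S k) := by
    intro k
    refine ⟨?_, ?_, ?_, ?_⟩
    · refine hcs.of_isClosed_subset ?_ ?_
      · rw [hSpre k]; exact (isClosed_discrete _).preimage hcont
      · intro z hzk
        have h1 : (k : ℤ) + 1 ≤ f z := hzk
        have : f z ≠ 0 := by omega
        exact subset_tsupport _ this
    · rw [hSpre k]; exact (isOpen_discrete _).preimage hcont
    · intro a ha b hb hab
      rw [← 𝒢.r_unit a (hSsub k ha), hab, 𝒢.r_unit b (hSsub k hb)]
    · intro a ha b hb hab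
      rw [← 𝒢.s_unit a (hSsub k ha), hab, 𝒢.s_unit b (hSsub k hb)]
  have hsval : ∀ k z, 𝒢.srcInd (S k) z = if (k : ℤ) + 1 ≤ f z then 1 else 0 := by
    intro k z
    unfold srcInd
    rw [𝒢.image_s_of_subset_unit (hSsub k), Set.indicator_apply]
    . simp [hS]
  have hrval : ∀ k z, 𝒢.ranInd (S k) z = if (k : ℤ) + 1 ≤ f z then 1 else 0 := by
    intro k z
    unfold ranInd
    rw [𝒢.image_r_of_subset_unit (hSsub k), Set.indicator_apply]
    . simp [hS]
  refine ⟨(List.range N).map S, ?_, ?_, ?_⟩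
  · intro X hX
    obtain ⟨k, _, rfl⟩ := List.mem_map.mp hX
    exact hSicob k
  · funext z
    rw [list_sum_apply', List.map_map]
    have hmc : ((List.range N).map ((fun E => 𝒢.srcInd E z) ∘ S))
        = (List.range N).map fun (k : ℕ) => if (k : ℤ) + 1 ≤ f z then (1 : ℤ) else 0 :=
      List.map_congr_left fun k _ => hsval k z
    rw [hmc, sum_range_indicator N (f z) (hpos z)]
    have := hbound z
    have := hpos z
    omega
  · funext z
    rw [list_sum_apply', List.map_map]
    have hmc : ((List.range N).map ((fun E => 𝒢.ranInd E z) ∘ S))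
        = (List.range N).map fun (k : ℕ) => if (k : ℤ) + 1 ≤ f z then (1 : ℤ) else 0 :=
      List.map_congr_left fun k _ => hrval k z
    rw [hmc, sum_range_indicator N (f z) (hpos z)]
    have := hbound z
    have := hpos z
    omega

end EtaleGroupoid

/-- For an ample étale groupoid `G`, the relation `∼_G` on
`C_c(G⁰, ℤ)⁺` — defined by `f ∼_G g` iff there are finitely many compact open bisections
`E₁, …, Eₙ` with `f = Σᵢ 1_{s(Eᵢ)}` and `g = Σᵢ 1_{r(Eᵢ)}` — is an equivalence
relation. -/
theorem typeRel_equivalence {G : Type*} [TopologicalSpace G]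
    [LocallyCompactSpace G] [T2Space G] [SecondCountableTopology G]
    (𝒢 : EtaleGroupoid G) (hample : 𝒢.Ample) :
    Equivalence (fun f g : ↥𝒢.CcPos => 𝒢.TypeRel f.1 g.1) := by
  refine ⟨?_, ?_, ?_⟩
  · intro x
    exact EtaleGroupoid.typeRel_refl x.2
  · rintro x y ⟨L, hL, hf, hg⟩
    refine ⟨L.map (fun E => 𝒢.inv '' E), ?_, ?_, ?_⟩
    · intro X hX
      obtain ⟨E, hE, rfl⟩ := List.mem_map.mp hX
      exact EtaleGroupoid.icob_inv (hL E hE)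
    · have h1 : (L.map (fun E => 𝒢.inv '' E)).map 𝒢.srcInd = L.map 𝒢.ranInd := by
        rw [List.map_map]
        exact List.map_congr_left fun E _ => 𝒢.srcInd_inv E
      rw [h1]; exact hg
    · have h1 : (L.map (fun E => 𝒢.inv '' E)).map 𝒢.ranInd = L.map 𝒢.srcInd := by
        rw [List.map_map]
        exact List.map_congr_left fun E _ => 𝒢.ranInd_inv E
      rw [h1]; exact hf
  · rintro x y z ⟨L, hL, hf, hg⟩ ⟨M, hM, hg', hh⟩
    obtain ⟨K, hK, hKs, hKr⟩ := EtaleGroupoid.trans_key L M hL hM (hg.symm.trans hg')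
    exact ⟨K, hK, hf.trans hKs.symm, hh.trans hKr.symm⟩
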